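/- arXiv:cs/0607032 — 2 statements merged into one kernel-verified Lean document; each statement's English description precedes it below -/
import Mathlib

section
/- For every integer j ≥ 1 the limit Q(j) := lim_{n→∞} P(n,j) exists; moreover Q(1) = e^{−1} and, for every j ≥ 2, Q(j) = e^{−1}·Q(j−1) + Σ_{k≥2} (e^{−1}/k!)·P(k,j−1), where the sum is the (convergent) infinite series over all integers k ≥ 2. -/
open Filter Topology Finset

private lemma one_sub_inv_nonneg {n : ℕ} (hn : 1 ≤ n) : (0:ℝ) ≤ 1 - 1/(n:ℝ) := by
  have h1 : (1:ℝ) ≤ (n:ℝ) := by exact_mod_cast hn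
  have : 1/(n:ℝ) ≤ 1 := by
    rw [div_le_one (by linarith)]; exact h1
  linarith

private lemma one_sub_inv_le_one {n : ℕ} : 1 - 1/(n:ℝ) ≤ 1 := by
  have : (0:ℝ) ≤ 1/(n:ℝ) := by positivity
  linarith

private lemma b_nonneg {n : ℕ} (hn : 1 ≤ n) (k : ℕ) :
    0 ≤ (n.choose k : ℝ) * (1/(n:ℝ))^k * (1 - 1/(n:ℝ))^(n-k) := by
  have h := one_sub_inv_nonneg hn
  positivity

private lemma b_le {n : ℕ} (hn : 1 ≤ n) (k : ℕ) :
    (n.choose k : ℝ) * (1/(n:ℝ))^k * (1 - 1/(n:ℝ))^(n-k) ≤ 1 / k.factorial := by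
  have hnp : (0:ℝ) < (n:ℝ) := by exact_mod_cast hn
  have h1 : (1 - 1/(n:ℝ))^(n-k) ≤ 1 :=
    pow_le_one₀ (one_sub_inv_nonneg hn) one_sub_inv_le_one
  have hfk : (0:ℝ) < (k.factorial : ℝ) := by exact_mod_cast k.factorial_pos
  have hd : (k.factorial : ℝ) * (n.choose k : ℝ) ≤ (n:ℝ)^k := by
    have := Nat.descFactorial_le_pow n k
    rw [Nat.descFactorial_eq_factorial_mul_choose] at this
    exact_mod_cast this
  have h2 : (n.choose k : ℝ) * (1/(n:ℝ))^k ≤ 1 / k.factorial := by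
    rw [le_div_iff₀ hfk]
    calc (n.choose k : ℝ) * (1/(n:ℝ))^k * (k.factorial:ℝ)
        = ((k.factorial:ℝ) * (n.choose k:ℝ)) * (1/(n:ℝ))^k := by ring
      _ ≤ (n:ℝ)^k * (1/(n:ℝ))^k := mul_le_mul_of_nonneg_right hd (by positivity)
      _ = 1 := by rw [← mul_pow, mul_one_div, div_self (ne_of_gt hnp), one_pow]
  have hcn : (0:ℝ) ≤ (n.choose k : ℝ) * (1/(n:ℝ))^k := by positivity
  calc (n.choose k : ℝ) * (1/(n:ℝ))^k * (1 - 1/(n:ℝ))^(n-k)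
      ≤ (n.choose k : ℝ) * (1/(n:ℝ))^k * 1 := mul_le_mul_of_nonneg_left h1 hcn
    _ = (n.choose k : ℝ) * (1/(n:ℝ))^k := mul_one _
    _ ≤ 1 / k.factorial := h2

private lemma b_sum_one {n : ℕ} (hn : 1 ≤ n) :
    ∑ k ∈ range (n+1), (n.choose k : ℝ) * (1/(n:ℝ))^k * (1 - 1/(n:ℝ))^(n-k) = 1 := by
  have h := add_pow (1/(n:ℝ)) (1 - 1/(n:ℝ)) n
  rw [add_sub_cancel, one_pow] at h
  calc ∑ k ∈ range (n+1), (n.choose k : ℝ) * (1/(n:ℝ))^k * (1 - 1/(n:ℝ))^(n-k)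
      = ∑ m ∈ range (n+1), (1/(n:ℝ))^m * (1 - 1/(n:ℝ))^(n-m) * (n.choose m : ℝ) :=
        Finset.sum_congr rfl (fun k _ => by ring)
    _ = 1 := h.symm

private lemma one_sub_div_pow_tendsto :
    Tendsto (fun n : ℕ => (1 - 1/(n:ℝ))^n) atTop (𝓝 (Real.exp (-1))) := by
  have := Real.tendsto_one_add_div_pow_exp (-1)
  refine this.congr fun n => ?_
  rw [neg_div, ← sub_eq_add_neg]

private lemma pow_sub_tendsto (k : ℕ) :
    Tendsto (fun n : ℕ => (1 - 1/(n:ℝ))^(n-k)) atTop (𝓝 (Real.exp (-1))) := by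
  have hbase : Tendsto (fun n : ℕ => (1 - 1/(n:ℝ))) atTop (𝓝 1) := by
    have := tendsto_one_div_atTop_nhds_zero_nat (𝕜 := ℝ)
    simpa using tendsto_const_nhds.sub this
  have h2 : Tendsto (fun n : ℕ => (1 - 1/(n:ℝ))^k) atTop (𝓝 1) := by
    simpa using hbase.pow k
  have h := one_sub_div_pow_tendsto.div h2 one_ne_zero
  rw [div_one] at h
  refine h.congr' ?_
  filter_upwards [eventually_ge_atTop (k+2)] with n hn
  have hnk : k ≤ n := by omega
  have h2n : (2:ℝ) ≤ (n:ℝ) := by exact_mod_cast (by omega : 2 ≤ n)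
  have hne : (1 - 1/(n:ℝ)) ≠ 0 := by
    have h12 : 1/(n:ℝ) ≤ 1/2 := one_div_le_one_div_of_le (by norm_num) h2n
    intro hcon; rw [sub_eq_zero] at hcon; rw [← hcon] at h12; linarith
  show (1 - 1/(n:ℝ))^n / (1 - 1/(n:ℝ))^k = (1 - 1/(n:ℝ))^(n-k)
  rw [pow_sub₀ _ hne hnk, div_eq_mul_inv]

private lemma choose_mul_tendsto (k : ℕ) :
    Tendsto (fun n : ℕ => (n.choose k : ℝ) * (1/(n:ℝ))^k) atTop (𝓝 (1 / k.factorial)) := by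
  have hprod : Tendsto (fun n : ℕ => ∏ i ∈ range k, (1 - (i:ℝ)/(n:ℝ))) atTop (𝓝 1) := by
    have h1 : ∀ i ∈ range k, Tendsto (fun n : ℕ => (1 - (i:ℝ)/(n:ℝ))) atTop (𝓝 (1:ℝ)) := by
      intro i _
      have h0 : Tendsto (fun n : ℕ => (i:ℝ)/(n:ℝ)) atTop (𝓝 0) := by
        simpa [mul_one_div, div_eq_mul_inv] using tendsto_one_div_atTop_nhds_zero_nat.const_mul (i:ℝ)
      simpa using tendsto_const_nhds.sub h0
    simpa using tendsto_finset_prod (range k) h1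
  have h := hprod.const_mul (1 / (k.factorial : ℝ))
  rw [mul_one] at h
  refine h.congr' ?_
  filter_upwards [eventually_ge_atTop (k+1)] with n hn
  have hk : k ≤ n := by omega
  have hnp : ((n:ℝ)) ≠ 0 := by
    have : (1:ℝ) ≤ (n:ℝ) := by exact_mod_cast (by omega : 1 ≤ n)
    linarith
  have hfk : ((k.factorial : ℕ):ℝ) ≠ 0 := by exact_mod_cast k.factorial_ne_zero
  have hdesc : ((n.descFactorial k : ℕ):ℝ) = ∏ i ∈ range k, ((n:ℝ) - (i:ℝ)) := by
    rw [Nat.descFactorial_eq_prod_range, Nat.cast_prod]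
    refine Finset.prod_congr rfl fun i hi => ?_
    exact Nat.cast_sub (le_trans (le_of_lt (mem_range.mp hi)) hk)
  have hc : (n.choose k : ℝ) = (∏ i ∈ range k, ((n:ℝ) - (i:ℝ))) / (k.factorial : ℝ) := by
    rw [eq_div_iff hfk]
    have h2 : ((n.descFactorial k : ℕ):ℝ) = (k.factorial : ℝ) * (n.choose k : ℝ) := by
      exact_mod_cast congrArg (Nat.cast : ℕ → ℝ) (Nat.descFactorial_eq_factorial_mul_choose n k)
    rw [hdesc] at h2
    linarith [h2]
  have hfac : ∏ i ∈ range k, (1 - (i:ℝ)/(n:ℝ)) =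
      (∏ i ∈ range k, ((n:ℝ) - (i:ℝ))) * (1/(n:ℝ))^k := by
    calc ∏ i ∈ range k, (1 - (i:ℝ)/(n:ℝ))
        = ∏ i ∈ range k, (((n:ℝ) - (i:ℝ)) * (1/(n:ℝ))) := by
          refine Finset.prod_congr rfl fun i _ => ?_
          rw [mul_one_div, sub_div, div_self hnp]
      _ = (∏ i ∈ range k, ((n:ℝ) - (i:ℝ))) * (∏ _i ∈ range k, (1/(n:ℝ))) :=
          Finset.prod_mul_distrib
      _ = _ := by rw [Finset.prod_const, card_range]
  show (1 / (k.factorial:ℝ)) * ∏ i ∈ range k, (1 - (i:ℝ)/(n:ℝ)) =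
    (n.choose k : ℝ) * (1/(n:ℝ))^k
  rw [hfac, hc]
  ring

private lemma b_tendsto (k : ℕ) :
    Tendsto (fun n : ℕ => (n.choose k : ℝ) * (1/(n:ℝ))^k * (1 - 1/(n:ℝ))^(n-k)) atTop
      (𝓝 (Real.exp (-1) / k.factorial)) := by
  have h := (choose_mul_tendsto k).mul (pow_sub_tendsto k)
  have he : Real.exp (-1) / (k.factorial:ℝ) = 1 / (k.factorial:ℝ) * Real.exp (-1) := by ring
  rw [he]
  exact h

private lemma summable_shift_fact : Summable (fun m : ℕ => 1 / ((m+2).factorial : ℝ)) := by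
  have h := Real.summable_pow_div_factorial 1
  simp only [one_pow] at h
  exact h.comp_injective (add_left_injective 2)

private lemma b_partial_le {n : ℕ} (hn : 2 ≤ n) :
    (1 - 1/(n:ℝ))^n +
      ∑ k ∈ Icc 2 n, (n.choose k : ℝ) * (1/(n:ℝ))^k * (1 - 1/(n:ℝ))^(n-k) ≤ 1 := by
  have hn1 : 1 ≤ n := by omega
  have h0 : (1 - 1/(n:ℝ))^n
      = (n.choose 0 : ℝ) * (1/(n:ℝ))^0 * (1 - 1/(n:ℝ))^(n-0) := by simp
  rw [h0, ← Finset.sum_insert (f := fun k => (n.choose k : ℝ) * (1/(n:ℝ))^k * (1 - 1/(n:ℝ))^(n-k))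
    (by simp : (0:ℕ) ∉ Icc 2 n)]
  refine le_trans ?_ (le_of_eq (b_sum_one hn1))
  apply Finset.sum_le_sum_of_subset_of_nonneg
  · intro k hk
    simp only [mem_insert, mem_Icc] at hk
    rw [mem_range]; omega
  · intro k _ _; exact b_nonneg hn1 k

private lemma Pabs_le (P : ℕ → ℕ → ℝ)
    (hP1 : ∀ n : ℕ, 2 ≤ n → P n 1 = (1 - 1/(n:ℝ))^(n-1))
    (hP : ∀ n : ℕ, 2 ≤ n → ∀ j : ℕ, 2 ≤ j →
      P n j = (1 - 1/(n:ℝ))^n * P n (j-1) +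
        ∑ k ∈ Finset.Icc 2 n,
          (n.choose k : ℝ) * (1/(n:ℝ))^k * (1 - 1/(n:ℝ))^(n-k) * P k (j-1)) :
    ∀ j : ℕ, 1 ≤ j → ∀ n : ℕ, 2 ≤ n → |P n j| ≤ 1 := by
  intro j hj
  induction j, hj using Nat.le_induction with
  | base =>
    intro n hn
    have h0 := one_sub_inv_nonneg (show 1 ≤ n by omega)
    rw [hP1 n hn, abs_of_nonneg (pow_nonneg h0 _)]
    exact pow_le_one₀ h0 one_sub_inv_le_one
  | succ j hj ih =>
    intro n hn
    have hn1 : 1 ≤ n := by omega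
    have h0 := one_sub_inv_nonneg hn1
    rw [hP n hn (j+1) (by omega)]
    simp only [Nat.add_sub_cancel]
    calc |(1 - 1/(n:ℝ))^n * P n j +
        ∑ k ∈ Icc 2 n, (n.choose k : ℝ) * (1/(n:ℝ))^k * (1 - 1/(n:ℝ))^(n-k) * P k j|
        ≤ |(1 - 1/(n:ℝ))^n * P n j| +
          |∑ k ∈ Icc 2 n, (n.choose k : ℝ) * (1/(n:ℝ))^k * (1 - 1/(n:ℝ))^(n-k) * P k j| :=
          abs_add_le _ _
      _ ≤ (1 - 1/(n:ℝ))^n +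
          ∑ k ∈ Icc 2 n, (n.choose k : ℝ) * (1/(n:ℝ))^k * (1 - 1/(n:ℝ))^(n-k) := by
          have ha : |(1 - 1/(n:ℝ))^n * P n j| ≤ (1 - 1/(n:ℝ))^n := by
            rw [abs_mul, abs_of_nonneg (pow_nonneg h0 _)]
            calc (1 - 1/(n:ℝ))^n * |P n j| ≤ (1 - 1/(n:ℝ))^n * 1 :=
                mul_le_mul_of_nonneg_left (ih n hn) (pow_nonneg h0 _)
              _ = _ := mul_one _
          have hb : |∑ k ∈ Icc 2 n, (n.choose k : ℝ) * (1/(n:ℝ))^k * (1 - 1/(n:ℝ))^(n-k) * P k j|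
              ≤ ∑ k ∈ Icc 2 n, (n.choose k : ℝ) * (1/(n:ℝ))^k * (1 - 1/(n:ℝ))^(n-k) := by
            calc |∑ k ∈ Icc 2 n, (n.choose k : ℝ) * (1/(n:ℝ))^k * (1 - 1/(n:ℝ))^(n-k) * P k j|
                ≤ ∑ k ∈ Icc 2 n,
                    |(n.choose k : ℝ) * (1/(n:ℝ))^k * (1 - 1/(n:ℝ))^(n-k) * P k j| :=
                  Finset.abs_sum_le_sum_abs _ _
              _ ≤ ∑ k ∈ Icc 2 n, (n.choose k : ℝ) * (1/(n:ℝ))^k * (1 - 1/(n:ℝ))^(n-k) := by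
                  apply Finset.sum_le_sum
                  intro k hk
                  rw [mem_Icc] at hk
                  rw [abs_mul, abs_of_nonneg (b_nonneg hn1 k)]
                  calc (n.choose k : ℝ) * (1/(n:ℝ))^k * (1 - 1/(n:ℝ))^(n-k) * |P k j|
                      ≤ (n.choose k : ℝ) * (1/(n:ℝ))^k * (1 - 1/(n:ℝ))^(n-k) * 1 :=
                        mul_le_mul_of_nonneg_left (ih k hk.1) (b_nonneg hn1 k)
                    _ = _ := mul_one _
          linarith
      _ ≤ 1 := b_partial_le hn

private lemma step_tendsto (P : ℕ → ℕ → ℝ)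
    (hPle : ∀ j : ℕ, 1 ≤ j → ∀ n : ℕ, 2 ≤ n → |P n j| ≤ 1)
    (hP : ∀ n : ℕ, 2 ≤ n → ∀ j : ℕ, 2 ≤ j →
      P n j = (1 - 1/(n:ℝ))^n * P n (j-1) +
        ∑ k ∈ Finset.Icc 2 n,
          (n.choose k : ℝ) * (1/(n:ℝ))^k * (1 - 1/(n:ℝ))^(n-k) * P k (j-1))
    (j : ℕ) (hj : 1 ≤ j) (L : ℝ) (hL : Tendsto (fun n : ℕ => P n j) atTop (𝓝 L)) :
    Tendsto (fun n : ℕ => P n (j+1)) atTop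
      (𝓝 (Real.exp (-1) * L +
        ∑' m : ℕ, Real.exp (-1) / ((m+2).factorial : ℝ) * P (m+2) j)) := by
  set f : ℕ → ℕ → ℝ := fun n m =>
    if m + 2 ≤ n then
      (n.choose (m+2) : ℝ) * (1/(n:ℝ))^(m+2) * (1 - 1/(n:ℝ))^(n-(m+2)) * P (m+2) j
    else 0 with hf
  have hab : ∀ m : ℕ, Tendsto (fun n => f n m) atTop
      (𝓝 (Real.exp (-1) / ((m+2).factorial : ℝ) * P (m+2) j)) := by
    intro m
    have h := (b_tendsto (m+2)).mul_const (P (m+2) j)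
    refine Tendsto.congr' ?_ h
    filter_upwards [eventually_ge_atTop (m+2)] with n hn
    simp only [hf, if_pos hn]
  have hb : ∀ᶠ n in atTop, ∀ m : ℕ, ‖f n m‖ ≤ 1 / ((m+2).factorial : ℝ) := by
    filter_upwards [eventually_ge_atTop 2] with n hn m
    by_cases h : m + 2 ≤ n
    · simp only [hf, if_pos h]
      have h1 := b_le (show 1 ≤ n by omega) (m+2)
      have h2 := b_nonneg (show 1 ≤ n by omega) (m+2)
      have h3 := hPle j hj (m+2) (by omega)
      rw [Real.norm_eq_abs, abs_mul, abs_of_nonneg h2]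
      calc (n.choose (m+2) : ℝ) * (1/(n:ℝ))^(m+2) * (1 - 1/(n:ℝ))^(n-(m+2)) * |P (m+2) j|
          ≤ (1 / ((m+2).factorial : ℝ)) * 1 :=
            mul_le_mul h1 h3 (abs_nonneg _) (by positivity)
        _ = _ := mul_one _
    · simp only [hf, if_neg h, norm_zero]
      positivity
  have htan := tendsto_tsum_of_dominated_convergence summable_shift_fact hab hb
  have h1 : Tendsto (fun n : ℕ => (1 - 1/(n:ℝ))^n * P n j) atTop (𝓝 (Real.exp (-1) * L)) :=
    one_sub_div_pow_tendsto.mul hL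
  refine Tendsto.congr' ?_ (h1.add htan)
  filter_upwards [eventually_ge_atTop 2] with n hn
  rw [hP n hn (j+1) (by omega)]
  simp only [Nat.add_sub_cancel]
  congr 1
  have hts : ∑' m, f n m = ∑ m ∈ range (n-1), f n m := by
    apply tsum_eq_sum
    intro m hm
    rw [mem_range, not_lt] at hm
    simp only [hf, if_neg (by omega : ¬ (m + 2 ≤ n))]
  rw [hts]
  have hIcc : Icc 2 n = Ico 2 (n+1) := by rw [Finset.Ico_add_one_right_eq_Icc]
  rw [hIcc, Finset.sum_Ico_eq_sum_range]
  have hrange : n + 1 - 2 = n - 1 := by omega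
  rw [hrange]
  apply Finset.sum_congr rfl
  intro m hm
  rw [mem_range] at hm
  have hmn : m + 2 ≤ n := by omega
  simp only [hf, if_pos hmn]
  rw [add_comm 2 m]

/-- for each j ≥ 1 the limit Q(j) = lim_{n→∞} P(n,j) exists, with
    Q(1) = e⁻¹ and Q(j) = e⁻¹·Q(j−1) + Σ_{k≥2} (e⁻¹/k!)·P(k,j−1) for j ≥ 2. -/
theorem P_limit_recurrence
    (P : ℕ → ℕ → ℝ)
    (hP1 : ∀ n : ℕ, 2 ≤ n → P n 1 = (1 - 1/(n:ℝ))^(n-1))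
    (hP : ∀ n : ℕ, 2 ≤ n → ∀ j : ℕ, 2 ≤ j →
      P n j = (1 - 1/(n:ℝ))^n * P n (j-1) +
        ∑ k ∈ Finset.Icc 2 n,
          (n.choose k : ℝ) * (1/(n:ℝ))^k * (1 - 1/(n:ℝ))^(n-k) * P k (j-1)) :
    ∃ Q : ℕ → ℝ,
      (∀ j : ℕ, 1 ≤ j → Tendsto (fun n : ℕ => P n j) atTop (𝓝 (Q j))) ∧
      Q 1 = Real.exp (-1) ∧
      (∀ j : ℕ, 2 ≤ j →
        Summable (fun k : ℕ => Real.exp (-1) / (Nat.factorial (k+2)) * P (k+2) (j-1)) ∧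
        Q j = Real.exp (-1) * Q (j-1) +
          ∑' k : ℕ, Real.exp (-1) / (Nat.factorial (k+2)) * P (k+2) (j-1)) := by
  have hPle := Pabs_le P hP1 hP
  set Q : ℕ → ℝ := fun j => Nat.rec (motive := fun _ => ℝ) 0
    (fun j' ih => if j' = 0 then Real.exp (-1)
      else Real.exp (-1) * ih +
        ∑' m : ℕ, Real.exp (-1) / (Nat.factorial (m+2) : ℝ) * P (m+2) j') j with hQdef
  have hQ1 : Q 1 = Real.exp (-1) := by simp [hQdef]
  have hQsucc : ∀ j : ℕ, 1 ≤ j → Q (j+1) = Real.exp (-1) * Q j +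
      ∑' m : ℕ, Real.exp (-1) / (Nat.factorial (m+2) : ℝ) * P (m+2) j := by
    intro j hj
    have hne : j ≠ 0 := by omega
    simp only [hQdef]
    rw [if_neg hne]
  have htend : ∀ j : ℕ, 1 ≤ j → Tendsto (fun n : ℕ => P n j) atTop (𝓝 (Q j)) := by
    intro j hj
    induction j, hj using Nat.le_induction with
    | base =>
      rw [hQ1]
      refine Tendsto.congr' ?_ (pow_sub_tendsto 1)
      filter_upwards [eventually_ge_atTop 2] with n hn
      exact (hP1 n hn).symm
    | succ j hj ih =>
      rw [hQsucc j hj]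
      exact step_tendsto P hPle hP j hj (Q j) ih
  refine ⟨Q, htend, hQ1, ?_⟩
  intro j hj
  obtain ⟨j', rfl⟩ : ∃ j', j = j' + 1 := ⟨j - 1, by omega⟩
  have hj' : 1 ≤ j' := by omega
  have hexp1 : Real.exp (-1) ≤ 1 := by
    have := Real.exp_le_exp.mpr (by norm_num : (-1:ℝ) ≤ 0)
    rwa [Real.exp_zero] at this
  constructor
  · apply Summable.of_norm_bounded summable_shift_fact
    intro m
    simp only [Nat.add_sub_cancel]
    have h3 := hPle j' hj' (m+2) (by omega)
    have hexp0 : (0:ℝ) < Real.exp (-1) := Real.exp_pos _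
    have hfk : (0:ℝ) < ((m+2).factorial : ℝ) := by exact_mod_cast (m+2).factorial_pos
    rw [Real.norm_eq_abs, abs_mul, abs_of_nonneg (by positivity : (0:ℝ) ≤ Real.exp (-1) / ((m+2).factorial : ℝ))]
    calc Real.exp (-1) / ((m+2).factorial : ℝ) * |P (m+2) j'|
        ≤ (1 / ((m+2).factorial : ℝ)) * 1 := by
          apply mul_le_mul _ h3 (abs_nonneg _) (by positivity)
          exact div_le_div_of_nonneg_right hexp1 hfk.le
      _ = 1 / ((m+2).factorial : ℝ) := mul_one _
  · simp only [Nat.add_sub_cancel]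
    exact hQsucc j' hj'
end

section
/- For every integer k ≥ 2, the limit R(k) := lim_{j→∞} 2^j·P(k,j) exists; moreover R(2) = 1 and, for every k ≥ 3, R(k) = 2·(1−1/k)^k·R(k) + 2·Σ_{ℓ=2}^{k} b(k,ℓ)·R(ℓ) (which determines R(k) recursively since 1 − 2·(1−1/k)^k − 2·(1/k)^k ≠ 0 for k ≥ 3). -/
open Filter Topology Finset

private lemma rate_lt_one {k : ℕ} (hk : 3 ≤ k) :
    2 * ((1 - 1/(k:ℝ))^k + (1/(k:ℝ))^k) < 1 := by
  have hk3 : (3:ℝ) ≤ (k:ℝ) := by exact_mod_cast hk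
  have hk0 : (0:ℝ) < k := by linarith
  have hinv : 1/(k:ℝ) ≤ 1/3 := by
    apply one_div_le_one_div_of_le (by norm_num) hk3
  have h1' : (0:ℝ) ≤ 1 - 1/k := by linarith
  have h1 : (1 - 1/(k:ℝ)) ≤ Real.exp (-(1/k)) := by
    have := Real.add_one_le_exp (-(1/(k:ℝ)))
    linarith
  have h2 : (1 - 1/(k:ℝ))^k ≤ Real.exp (-1) := by
    calc (1 - 1/(k:ℝ))^k ≤ (Real.exp (-(1/k)))^k := pow_le_pow_left₀ h1' h1 k
      _ = Real.exp ((k:ℝ) * (-(1/k))) := by rw [← Real.exp_nat_mul]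
      _ = Real.exp (-1) := by congr 1; field_simp
  have h3 : (1/(k:ℝ))^k ≤ (1/3:ℝ)^3 := by
    calc (1/(k:ℝ))^k ≤ (1/(k:ℝ))^3 :=
        pow_le_pow_of_le_one (by positivity) (by linarith) hk
      _ ≤ (1/3:ℝ)^3 := by
        apply pow_le_pow_left₀ (by positivity) hinv
  have he : Real.exp (-1) < 25/54 := by
    rw [Real.exp_neg]
    have hp : (0:ℝ) < Real.exp 1 := Real.exp_pos 1
    have hgt := Real.exp_one_gt_d9
    have hmul : Real.exp 1 * (Real.exp 1)⁻¹ = 1 := mul_inv_cancel₀ (ne_of_gt hp)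
    nlinarith [inv_pos.mpr hp]
  have h33 : ((1:ℝ)/3)^3 = 1/27 := by norm_num
  rw [h33] at h3
  linarith

private lemma tendsto_linear_rec {r : ℝ} (hr0 : 0 ≤ r) (hr1 : r < 1)
    (x y : ℕ → ℝ) (Y : ℝ) (hy : Tendsto y atTop (𝓝 Y))
    (hrec : ∀ m, x (m+1) = r * x m + y m) :
    Tendsto x atTop (𝓝 (Y / (1 - r))) := by
  have hr1' : (0:ℝ) < 1 - r := by linarith
  set L := Y / (1 - r) with hL
  have hLe : r * L + Y = L := by
    rw [hL]; field_simp; ring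
  set e := fun m => x m - L with he
  set d := fun m => y m - Y with hd
  have herec : ∀ m, e (m+1) = r * e m + d m := by
    intro m
    simp only [he, hd, hrec m]
    linear_combination hLe
  have bound : ∀ δ : ℝ, 0 < δ → ∀ N : ℕ, (∀ j, N ≤ j → |d j| ≤ δ) →
      ∀ m, |e (N + m)| ≤ r ^ m * |e N| + δ / (1 - r) := by
    intro δ hδ N hdb m
    induction m with
    | zero =>
        simp only [Nat.add_zero, pow_zero, one_mul]
        have : 0 ≤ δ / (1 - r) := by positivity
        linarith
    | succ m ih =>
        have h1 : e (N + (m+1)) = r * e (N+m) + d (N+m) := herec (N+m)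
        have hformula : r * (δ/(1-r)) + δ = δ/(1-r) := by field_simp; ring
        calc |e (N + (m+1))| = |r * e (N+m) + d (N+m)| := by rw [h1]
          _ ≤ |r * e (N+m)| + |d (N+m)| := abs_add_le _ _
          _ ≤ r * |e (N+m)| + δ := by
              rw [abs_mul, abs_of_nonneg hr0]
              exact add_le_add le_rfl (hdb _ (Nat.le_add_right _ _))
          _ ≤ r * (r^m * |e N| + δ/(1-r)) + δ := by
              exact add_le_add (mul_le_mul_of_nonneg_left ih hr0) le_rfl
          _ = r^(m+1) * |e N| + (r * (δ/(1-r)) + δ) := by ring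
          _ = r^(m+1) * |e N| + δ/(1-r) := by rw [hformula]
  have he0 : Tendsto e atTop (𝓝 0) := by
    rw [Metric.tendsto_atTop]
    intro ε hε
    have hd0 : Tendsto d atTop (𝓝 0) := by
      have := hy.sub_const Y
      simpa [hd] using this
    obtain ⟨N, hN⟩ := (Metric.tendsto_atTop.mp hd0) (ε * (1-r)/4) (by positivity)
    have hdb : ∀ j, N ≤ j → |d j| ≤ ε*(1-r)/4 := by
      intro j hj
      have := hN j hj
      rw [Real.dist_eq, sub_zero] at this
      exact this.le
    have hpow : Tendsto (fun m => r^m * |e N|) atTop (𝓝 0) := by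
      simpa using (tendsto_pow_atTop_nhds_zero_of_lt_one hr0 hr1).mul_const (|e N|)
    obtain ⟨M, hM⟩ := (Metric.tendsto_atTop.mp hpow) (ε/2) (by linarith)
    refine ⟨N + M, fun j hj => ?_⟩
    rw [Real.dist_eq, sub_zero]
    have hkey := bound _ (by positivity : (0:ℝ) < ε*(1-r)/4) N hdb (j - N)
    rw [Nat.add_sub_cancel' (by omega : N ≤ j)] at hkey
    have h2 := hM (j - N) (by omega)
    rw [Real.dist_eq, sub_zero] at h2
    have h3 : r^(j-N) * |e N| < ε/2 := lt_of_abs_lt h2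
    have h4 : ε*(1-r)/4/(1-r) = ε/4 := by field_simp
    rw [h4] at hkey
    calc |e j| ≤ r^(j-N) * |e N| + ε/4 := hkey
      _ < ε/2 + ε/4 := by linarith
      _ < ε := by linarith
  have hfin := he0.add_const L
  simp only [zero_add] at hfin
  have : (fun m => e m + L) = x := by
    funext m; simp [he]
  rwa [this] at hfin

/-- for every k ≥ 2 the limit R(k) = lim_{j→∞} 2^j·P(k,j) exists, with
    R(2) = 1 and the stated recurrence for k ≥ 3. -/
theorem R_exists_and_recurrence
    (P : ℕ → ℕ → ℝ)
    (hP1 : ∀ n : ℕ, 2 ≤ n → P n 1 = (1 - 1/(n:ℝ))^(n-1))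
    (hP : ∀ n : ℕ, 2 ≤ n → ∀ j : ℕ, 2 ≤ j →
      P n j = (1 - 1/(n:ℝ))^n * P n (j-1) +
        ∑ k ∈ Finset.Icc 2 n,
          (n.choose k : ℝ) * (1/(n:ℝ))^k * (1 - 1/(n:ℝ))^(n-k) * P k (j-1)) :
    ∃ R : ℕ → ℝ,
      (∀ k : ℕ, 2 ≤ k →
        Tendsto (fun j : ℕ => (2:ℝ)^j * P k j) atTop (𝓝 (R k))) ∧
      R 2 = 1 ∧
      (∀ k : ℕ, 3 ≤ k →
        R k = 2 * (1 - 1/(k:ℝ))^k * R k +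
          2 * ∑ l ∈ Finset.Icc 2 k,
            (k.choose l : ℝ) * (1/(k:ℝ))^l * (1 - 1/(k:ℝ))^(k-l) * R l) := by

  classical
  -- the case k = 2 : P 2 (j+1) = (1/2)^(j+1)
  have hval2 : ∀ j : ℕ, P 2 (j+1) = (1/2:ℝ)^(j+1) := by
    intro j
    induction j with
    | zero =>
        have h := hP1 2 le_rfl
        norm_num at h ⊢
        exact h
    | succ j ih =>
        have h := hP 2 le_rfl (j+2) (by omega)
        simp only [show j+2-1 = j+1 from rfl, Finset.Icc_self, Finset.sum_singleton] at h
        norm_num at h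
        rw [h, ih]
        ring
  have h2lim : Tendsto (fun j : ℕ => (2:ℝ)^j * P 2 j) atTop (𝓝 1) := by
    apply (tendsto_add_atTop_iff_nat 1).mp
    have : (fun j : ℕ => (2:ℝ)^(j+1) * P 2 (j+1)) = fun _ : ℕ => (1:ℝ) := by
      funext j
      rw [hval2 j, ← mul_pow]
      norm_num
    rw [this]
    exact tendsto_const_nhds
  -- the main existence claim
  have key : ∀ k : ℕ, 2 ≤ k →
      ∃ L : ℝ, Tendsto (fun j : ℕ => (2:ℝ)^j * P k j) atTop (𝓝 L) := by
    intro k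
    induction k using Nat.strong_induction_on with
    | _ k IH =>
    intro hk
    rcases eq_or_lt_of_le hk with hk2 | hk3
    · exact hk2 ▸ ⟨1, h2lim⟩
    · -- k ≥ 3
      have hk3' : 3 ≤ k := hk3
      set r : ℝ := 2 * ((1 - 1/(k:ℝ))^k + (1/(k:ℝ))^k) with hr
      have hk0 : (0:ℝ) < k := by exact_mod_cast (by omega : 0 < k)
      have hinv : 1/(k:ℝ) ≤ 1/3 := by
        apply one_div_le_one_div_of_le (by norm_num)
        exact_mod_cast hk3'
      have h1' : (0:ℝ) ≤ 1 - 1/k := by linarith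
      have hr0 : 0 ≤ r := by
        have h1 := pow_nonneg h1' k
        have h2 : (0:ℝ) ≤ (1/(k:ℝ))^k := by positivity
        rw [hr]; linarith
      have hr1 : r < 1 := rate_lt_one hk3'
      -- limits for smaller indices
      have hIH : ∀ l ∈ Icc 2 (k-1), ∃ Ll : ℝ,
          Tendsto (fun m : ℕ => (2:ℝ)^(m+1) * P l (m+1)) atTop (𝓝 Ll) := by
        intro l hl
        rw [Finset.mem_Icc] at hl
        obtain ⟨Ll, hLl⟩ := IH l (by omega) hl.1
        exact ⟨Ll, (tendsto_add_atTop_iff_nat 1).mpr hLl⟩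
      choose Ll hLl using hIH
      set Y : ℝ := 2 * ∑ l ∈ (Icc 2 (k-1)).attach,
        ((k.choose l.1 : ℝ) * (1/(k:ℝ))^(l.1 : ℕ) * (1 - 1/(k:ℝ))^(k-l.1)) * Ll l.1 l.2 with hY
      set y : ℕ → ℝ := fun m => 2 * ∑ l ∈ Icc 2 (k-1),
        ((k.choose l : ℝ) * (1/(k:ℝ))^l * (1 - 1/(k:ℝ))^(k-l)) * ((2:ℝ)^(m+1) * P l (m+1)) with hy
      have hytend : Tendsto y atTop (𝓝 Y) := by
        rw [hy, hY]
        apply Tendsto.const_mul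
        have hrw : ∀ m : ℕ, (∑ l ∈ Icc 2 (k-1),
            ((k.choose l : ℝ) * (1/(k:ℝ))^l * (1 - 1/(k:ℝ))^(k-l)) * ((2:ℝ)^(m+1) * P l (m+1)))
            = ∑ l ∈ (Icc 2 (k-1)).attach,
            ((k.choose l.1 : ℝ) * (1/(k:ℝ))^(l.1:ℕ) * (1 - 1/(k:ℝ))^(k-l.1)) * ((2:ℝ)^(m+1) * P l.1 (m+1)) := by
          intro m
          rw [← Finset.sum_attach]
        simp only [hrw]
        apply tendsto_finset_sum
        intro l _
        exact (hLl l.1 l.2).const_mul _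
      -- the recurrence for x m = 2^(m+1) * P k (m+1)
      have hrec : ∀ m : ℕ,
          (2:ℝ)^(m+1+1) * P k (m+1+1) = r * ((2:ℝ)^(m+1) * P k (m+1)) + y m := by
        intro m
        have h := hP k hk (m+2) (by omega)
        simp only [show m+2-1 = m+1 from rfl] at h
        have hk1 : k - 1 + 1 = k := by omega
        have hsplit := Finset.sum_Icc_succ_top (by omega : 2 ≤ k - 1 + 1)
          (fun l => (k.choose l : ℝ) * (1/(k:ℝ))^l * (1 - 1/(k:ℝ))^(k-l) * P l (m+1))
        rw [hk1] at hsplit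
        rw [hsplit] at h
        simp only [Nat.choose_self, Nat.sub_self, pow_zero, Nat.cast_one, one_mul, mul_one] at h
        have hsum : (∑ l ∈ Icc 2 (k-1), (2:ℝ)^(m+2) *
              ((k.choose l : ℝ) * (1/(k:ℝ))^l * (1 - 1/(k:ℝ))^(k-l) * P l (m+1)))
            = 2 * ∑ l ∈ Icc 2 (k-1),
              ((k.choose l : ℝ) * (1/(k:ℝ))^l * (1 - 1/(k:ℝ))^(k-l)) * ((2:ℝ)^(m+1) * P l (m+1)) := by
          rw [Finset.mul_sum]
          exact Finset.sum_congr rfl (fun l _ => by ring)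
        simp only [hy, hr]
        rw [show m+1+1 = m+2 from rfl, h]
        rw [mul_add, mul_add, Finset.mul_sum, hsum]
        ring
      have hx := tendsto_linear_rec hr0 hr1 (fun m => (2:ℝ)^(m+1) * P k (m+1)) y Y hytend hrec
      exact ⟨Y / (1 - r), (tendsto_add_atTop_iff_nat 1).mp hx⟩
  -- define R
  set R : ℕ → ℝ := fun k => limUnder atTop (fun j : ℕ => (2:ℝ)^j * P k j) with hRdef
  have hRt : ∀ k : ℕ, 2 ≤ k →
      Tendsto (fun j : ℕ => (2:ℝ)^j * P k j) atTop (𝓝 (R k)) := by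
    intro k hk
    obtain ⟨L, hL⟩ := key k hk
    rw [hRdef]
    simpa only [hL.limUnder_eq] using hL
  refine ⟨R, hRt, ?_, ?_⟩
  · exact tendsto_nhds_unique (hRt 2 le_rfl) h2lim
  · intro k hk
    have hA : Tendsto (fun m : ℕ => (2:ℝ)^(m+2) * P k (m+2)) atTop (𝓝 (R k)) :=
      (tendsto_add_atTop_iff_nat 2).mpr (hRt k (by omega))
    have hB : Tendsto (fun m : ℕ =>
        2 * (1 - 1/(k:ℝ))^k * ((2:ℝ)^(m+1) * P k (m+1)) +
          2 * ∑ l ∈ Icc 2 k,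
            ((k.choose l : ℝ) * (1/(k:ℝ))^l * (1 - 1/(k:ℝ))^(k-l)) * ((2:ℝ)^(m+1) * P l (m+1)))
        atTop (𝓝 (2 * (1 - 1/(k:ℝ))^k * R k +
          2 * ∑ l ∈ Icc 2 k,
            ((k.choose l : ℝ) * (1/(k:ℝ))^l * (1 - 1/(k:ℝ))^(k-l)) * R l)) := by
      apply Tendsto.add
      · exact ((tendsto_add_atTop_iff_nat 1).mpr (hRt k (by omega))).const_mul _
      · apply Tendsto.const_mul
        apply tendsto_finset_sum
        intro l hl
        rw [Finset.mem_Icc] at hl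
        exact ((tendsto_add_atTop_iff_nat 1).mpr (hRt l hl.1)).const_mul _
    have heq : ∀ m : ℕ, (2:ℝ)^(m+2) * P k (m+2) =
        2 * (1 - 1/(k:ℝ))^k * ((2:ℝ)^(m+1) * P k (m+1)) +
          2 * ∑ l ∈ Icc 2 k,
            ((k.choose l : ℝ) * (1/(k:ℝ))^l * (1 - 1/(k:ℝ))^(k-l)) * ((2:ℝ)^(m+1) * P l (m+1)) := by
      intro m
      have h := hP k (by omega) (m+2) (by omega)
      simp only [show m+2-1 = m+1 from rfl] at h
      rw [h, mul_add, Finset.mul_sum, Finset.mul_sum]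
      congr 1
      · ring
      · exact Finset.sum_congr rfl (fun l _ => by ring)
    have hB' : Tendsto (fun m : ℕ => (2:ℝ)^(m+2) * P k (m+2)) atTop
        (𝓝 (2 * (1 - 1/(k:ℝ))^k * R k +
          2 * ∑ l ∈ Icc 2 k,
            ((k.choose l : ℝ) * (1/(k:ℝ))^l * (1 - 1/(k:ℝ))^(k-l)) * R l)) :=
      hB.congr (fun m => (heq m).symm)
    exact tendsto_nhds_unique hA hB'
end
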